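/- Let C be an irreducible cyclic code of length n over F_q given by c(a) = (Tr(a η^{jN}))_{j=0}^{n-1} with nN = q^r - 1 and η primitive. For 2 ≤ b, with θ_1, ..., θ_{(q^b-1)/(q-1)} a set of representatives of the F_q^*-lines in the span V = <1, η^N, ..., η^{(b-1)N}> (i.e., V \ {0} = ⊔_i θ_i F_q^*), the b-symbol weight of c(a) satisfies w_b(c(a)) = (1/q^{b-1}) Σ_{i=1}^{(q^b-1)/(q-1)} w_1(c(θ_i a)), provided {1, η^N, ..., η^{(b-1)N}} is F_q-linearly independent. -/
import Mathlib

/-- The `b`-symbol map `π_b`; indices are cyclic (mod `n`). -/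
def pib {F : Type*} [Field F] {n : ℕ} (b : ℕ) (x : ZMod n → F) :
    ZMod n → (Fin b → F) :=
  fun i j => x (i + ((j : ℕ) : ZMod n))

/-- The `b`-symbol Hamming weight `w_b(x)`. -/
noncomputable def wb {F : Type*} [Field F] {n : ℕ} (b : ℕ) (x : ZMod n → F) : ℕ :=
  Nat.card {i : ZMod n // pib b x i ≠ 0}

private lemma pow_mod_eq {G : Type*} [Monoid G] (ζ : G) {n : ℕ} (h : ζ ^ n = 1) (k : ℕ) :
    ζ ^ k = ζ ^ (k % n) := by
  conv_lhs => rw [← Nat.div_add_mod k n, pow_add, pow_mul, h, one_pow, one_mul]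

set_option maxHeartbeats 2000000 in
set_option synthInstance.maxHeartbeats 400000 in
theorem wb_eq_sum_w1 (q r N n b : ℕ) (hq : IsPrimePow q) (hodd : Odd q)
    (hr : 2 ≤ r) (hre : Even r) (hN : 0 < N) [NeZero n]
    (hnN : n * N = q ^ r - 1) (hb : 2 ≤ b) (hbr : b ≤ r)
    (F : Type*) [Field F] [Fintype F] (hF : Fintype.card F = q ^ r)
    (K : Subfield F) (hK : Nat.card K = q)
    (η : Fˣ) (hη : ∀ x : Fˣ, x ∈ Subgroup.zpowers η)
    (hind : LinearIndependent ↥K (fun j : Fin b => (η : F) ^ (N * (j : ℕ))))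
    (θ : Fin ((q ^ b - 1) / (q - 1)) → F)
    (hθ : ∀ v : F,
      v ∈ Submodule.span ↥K {x : F | ∃ j : Fin b, x = (η : F) ^ (N * (j : ℕ))} →
      v ≠ 0 → ∃! i, ∃ y : Kˣ, v = θ i * ((y : K) : F))
    (a : F) :
    (wb b (fun j : ZMod n => Algebra.trace ↥K F (a * (η : F) ^ (N * j.val))) : ℚ) =
      (1 / (q : ℚ) ^ (b - 1)) *
        ∑ i, (wb 1 (fun j : ZMod n =>
          Algebra.trace ↥K F (θ i * a * (η : F) ^ (N * j.val))) : ℚ) := by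
  classical
  haveI : Fintype K := Fintype.ofFinite K
  haveI : FiniteDimensional ↥K F := Module.Finite.of_finite
  have hcK : Fintype.card ↥K = q := by rw [← Nat.card_eq_fintype_card]; exact hK
  have hq2 : 2 ≤ q := by rw [← hcK]; exact Fintype.one_lt_card
  have hMq : (q ^ b - 1) / (q - 1) * (q - 1) = q ^ b - 1 := by
    apply Nat.div_mul_cancel
    simpa using Nat.sub_dvd_pow_sub_pow q 1 b
  -- order of η^N
  have hζ1 : ((η : F) ^ N) ^ n = 1 := by
    have hcu : Fintype.card Fˣ = q ^ r - 1 := by rw [Fintype.card_units, hF]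
    have h1 : η ^ (n * N) = 1 := by rw [hnN, ← hcu]; exact pow_card_eq_one
    have : ((η ^ (n * N) : Fˣ) : F) = 1 := by rw [h1]; rfl
    rw [← this]; push_cast [← pow_mul]; rw [Nat.mul_comm]
  set g : Fin b → F := fun j => (η : F) ^ (N * (j : ℕ)) with hg
  set V : Submodule ↥K F := Submodule.span ↥K (Set.range g) with hV
  have hsetV : {x : F | ∃ j : Fin b, x = (η : F) ^ (N * (j : ℕ))} = Set.range g := by
    ext x; simp [hg, eq_comm]
  have hgV : ∀ j, g j ∈ V := fun j => Submodule.subset_span ⟨j, rfl⟩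
  -- trace functional
  set T : F → (F →ₗ[↥K] ↥K) :=
    fun x => (Algebra.trace ↥K F).comp (LinearMap.mulLeft ↥K x) with hT
  have hTapp : ∀ x v, T x v = Algebra.trace ↥K F (x * v) := fun x v => rfl
  -- cardinality of V
  have hrankV : Module.finrank ↥K ↥V = b := by
    rw [hV, finrank_span_eq_card hind, Fintype.card_fin]
  have hcardV : Fintype.card ↥V = q ^ b := by
    rw [Module.card_eq_pow_finrank (K := ↥K) (V := ↥V), hcK, hrankV]
  -- the subtype of nonzero elements of V
  set D := {v : F // v ∈ V ∧ v ≠ 0} with hD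
  have hcardD : Fintype.card D = q ^ b - 1 := by
    have e : D ≃ {w : ↥V // ¬ (w = 0)} :=
      { toFun := fun v => ⟨⟨v.1, v.2.1⟩, fun h => v.2.2 (congrArg Subtype.val h)⟩
        invFun := fun w => ⟨w.1.1, w.1.2, fun h => w.2 (Subtype.ext h)⟩
        left_inv := fun v => rfl
        right_inv := fun w => rfl }
    rw [Fintype.card_congr e, Fintype.card_subtype_compl, hcardV, Fintype.card_subtype_eq]
  -- index function
  have hex : ∀ v : D, ∃ i, ∃ y : Kˣ, (v : F) = θ i * ((y : K) : F) := by
    intro v; exact (hθ v (hsetV ▸ v.2.1) v.2.2).exists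
  set f : D → Fin ((q ^ b - 1) / (q - 1)) := fun v => (hex v).choose with hf
  have hfspec : ∀ v : D, ∃ y : Kˣ, (v : F) = θ (f v) * ((y : K) : F) :=
    fun v => (hex v).choose_spec
  have huniq : ∀ (v : D) (i : Fin ((q ^ b - 1) / (q - 1))), (∃ y : Kˣ, (v : F) = θ i * ((y : K) : F)) → i = f v := by
    intro v i hi
    exact ((hθ v (hsetV ▸ v.2.1) v.2.2).unique hi (hfspec v))
  -- fibers
  set fib : Fin ((q ^ b - 1) / (q - 1)) → Finset D := fun i => Finset.univ.filter (fun v => f v = i) with hfib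
  have hfible : ∀ i, (fib i).card ≤ q - 1 := by
    intro i
    have hmap : ∀ v ∈ fib i,
        (v : F) ∈ (Finset.univ.image fun y : (↥K)ˣ => θ i * ((y : ↥K) : F)) := by
      intro v hv
      have hfv : f v = i := (Finset.mem_filter.mp hv).2
      obtain ⟨y, hy⟩ := hfspec v
      rw [hfv] at hy
      exact Finset.mem_image.mpr ⟨y, Finset.mem_univ _, hy.symm⟩
    have hinj : Set.InjOn (fun v : D => (v : F)) (fib i) := fun u _ v _ huv => Subtype.ext huv
    calc (fib i).card ≤ (Finset.univ.image fun y : (↥K)ˣ => θ i * ((y : ↥K) : F)).card :=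
          Finset.card_le_card_of_injOn _ hmap hinj
      _ ≤ (Finset.univ : Finset (↥K)ˣ).card := Finset.card_image_le
      _ = q - 1 := by rw [Finset.card_univ, Fintype.card_units, hcK]
  have hfibsum : ∑ i, (fib i).card = q ^ b - 1 := by
    rw [← Finset.card_eq_sum_card_fiberwise (fun v _ => Finset.mem_univ (f v)),
      Finset.card_univ, hcardD]
  have hfibcard : ∀ i, (fib i).card = q - 1 := by
    by_contra h
    push_neg at h
    obtain ⟨i0, hi0⟩ := h
    have hlt : ∑ i, (fib i).card < ∑ _i : Fin ((q ^ b - 1) / (q - 1)), (q - 1) :=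
      Finset.sum_lt_sum (fun i _ => hfible i)
        ⟨i0, Finset.mem_univ _, lt_of_le_of_ne (hfible i0) hi0⟩
    rw [hfibsum, Finset.sum_const, Finset.card_univ, Fintype.card_fin, smul_eq_mul, hMq] at hlt
    exact lt_irrefl _ hlt
  have hθV : ∀ i, θ i ∈ V ∧ θ i ≠ 0 := by
    intro i
    have hpos : 0 < (fib i).card := by rw [hfibcard i]; omega
    obtain ⟨v, hv⟩ := Finset.card_pos.mp hpos
    have hfv : f v = i := (Finset.mem_filter.mp hv).2
    obtain ⟨y, hy⟩ := hfspec v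
    rw [hfv] at hy
    have hθne : θ i ≠ 0 := by
      intro h0; apply v.2.2; rw [hy, h0, zero_mul]
    have hθmem : θ i ∈ V := by
      have : θ i = ((y⁻¹ : Kˣ) : ↥K) • (v : F) := by
        rw [hy]
        have : (((y⁻¹ : Kˣ) : ↥K) : F) * (((y : K) : F)) = 1 := by
          norm_cast
          simp
        calc θ i = θ i * ((((y⁻¹ : Kˣ) : ↥K) : F) * (((y : K)) : F)) := by rw [this, mul_one]
          _ = ((y⁻¹ : Kˣ) : ↥K) • (θ i * ((y : K) : F)) := by
              show _ = (((y⁻¹:Kˣ) : ↥K) : F) * _; ring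
      rw [this]
      exact V.smul_mem _ v.2.1
    exact ⟨hθmem, hθne⟩
  have hfibmem : ∀ (i : Fin ((q ^ b - 1) / (q - 1))) (v : D), v ∈ fib i ↔ ∃ y : Kˣ, (v : F) = θ i * ((y : K) : F) := by
    intro i v
    constructor
    · intro hv
      have : f v = i := (Finset.mem_filter.mp hv).2
      rw [← this]; exact hfspec v
    · intro hy
      rw [hfib, Finset.mem_filter]
      exact ⟨Finset.mem_univ _, (huniq v i hy).symm⟩
  -- the key count
  have key : ∀ x : F,
      (Finset.univ.filter fun i : Fin ((q ^ b - 1) / (q - 1)) => Algebra.trace ↥K F (θ i * x) ≠ 0).card =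
      if (∃ j : Fin b, Algebra.trace ↥K F (x * g j) ≠ 0) then q ^ (b - 1) else 0 := by
    intro x
    set L := T x with hL
    have hLθ : ∀ i, Algebra.trace ↥K F (θ i * x) = L (θ i) := by
      intro i; rw [hTapp, mul_comm]
    -- count over D via fibers
    have count1 : (q - 1) * (Finset.univ.filter fun i : Fin ((q ^ b - 1) / (q - 1)) => L (θ i) ≠ 0).card =
        (Finset.univ.filter fun v : D => L (v : F) ≠ 0).card := by
      have hLiff : ∀ (i : Fin ((q ^ b - 1) / (q - 1))) (v : D), f v = i →
          (L (v : F) ≠ 0 ↔ L (θ i) ≠ 0) := by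
        intro i v hfv
        obtain ⟨y, hy⟩ := hfspec v
        rw [hfv] at hy
        have hval : L (v : F) = ((y : ↥K)) * L (θ i) := by
          rw [hy, show θ i * (((y : ↥K)) : F) = (((y : ↥K)) : F) * θ i from mul_comm _ _,
            show ((((y : ↥K)) : F) * θ i) = ((y : ↥K)) • θ i from rfl, map_smul, smul_eq_mul]
        rw [hval]
        constructor
        · intro h h0; exact h (by rw [h0, mul_zero])
        · exact fun h => mul_ne_zero (Units.ne_zero y) h
      have hcf : (Finset.univ.filter fun v : D => L (v : F) ≠ 0).card
          = ∑ i, ((Finset.univ.filter fun v : D => L (v : F) ≠ 0).filter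
              fun v => f v = i).card :=
        Finset.card_eq_sum_card_fiberwise (fun v _ => Finset.mem_univ (f v))
      have hfe : ∀ i, ((Finset.univ.filter fun v : D => L (v : F) ≠ 0).filter
          fun v => f v = i).card = if L (θ i) ≠ 0 then q - 1 else 0 := by
        intro i
        split_ifs with hLi
        · have hset : (Finset.filter (fun v => f v = i)
              (Finset.filter (fun v : D => L (v : F) ≠ 0) Finset.univ)) = fib i := by
            ext v
            simp only [Finset.mem_filter, Finset.mem_univ, true_and, hfib]
            exact ⟨fun h => h.2, fun h => ⟨(hLiff i v h).mpr hLi, h⟩⟩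
          rw [hset, hfibcard i]
        · rw [Finset.card_eq_zero, Finset.filter_eq_empty_iff]
          intro v hv
          simp only [Finset.mem_filter, Finset.mem_univ, true_and] at hv
          intro hfv
          exact hLi ((hLiff i v hfv).mp hv)
      rw [hcf, Finset.sum_congr rfl (fun i _ => hfe i), ← Finset.sum_filter,
        Finset.sum_const, smul_eq_mul, Nat.mul_comm]
    -- relate D-count to V-count
    have count2 : (Finset.univ.filter fun v : D => L (v : F) ≠ 0).card =
        (Finset.univ.filter fun w : ↥V => L (w : F) ≠ 0).card := by
      apply Finset.card_bij (fun (v : D) (_ : v ∈ _) => (⟨(v : F), v.2.1⟩ : ↥V))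
      · intro v hv
        simp only [Finset.mem_filter, Finset.mem_univ, true_and] at hv ⊢
        exact hv
      · intro v₁ _ v₂ _ h
        have h2 := congrArg (Subtype.val : ↥V → F) h
        exact Subtype.ext h2
      · intro w hw
        simp only [Finset.mem_filter, Finset.mem_univ, true_and] at hw
        have hwne : (w : F) ≠ 0 := by
          intro h0
          apply hw
          rw [h0, map_zero]
        exact ⟨⟨(w : F), w.2, hwne⟩, by
          simp only [Finset.mem_filter, Finset.mem_univ, true_and]; exact hw, rfl⟩
    by_cases hnz : ∃ j : Fin b, Algebra.trace ↥K F (x * g j) ≠ 0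
    · rw [if_pos hnz]
      obtain ⟨j, hj⟩ := hnz
      have hwne : L ((⟨g j, hgV j⟩ : ↥V) : F) ≠ 0 := by
        exact hj
      have count3 : (Finset.univ.filter fun w : ↥V => L (w : F) ≠ 0).card =
          q ^ b - q ^ (b - 1) := by
        set L' := L.domRestrict V with hL'
        have hw0 : L' ⟨g j, hgV j⟩ ≠ 0 := hwne
        have hsurj : Function.Surjective L' := by
          intro c
          refine ⟨(c * (L' ⟨g j, hgV j⟩)⁻¹) • (⟨g j, hgV j⟩ : ↥V), ?_⟩
          rw [map_smul, smul_eq_mul, mul_assoc, inv_mul_cancel₀ hw0, mul_one]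
        have hrange : LinearMap.range L' = ⊤ := LinearMap.range_eq_top.mpr hsurj
        have h1 := LinearMap.finrank_range_add_finrank_ker L'
        rw [hrange, hrankV] at h1
        have h2 : Module.finrank ↥K ↥(⊤ : Submodule ↥K ↥K) = 1 := by simp
        rw [h2] at h1
        have hkerrank : Module.finrank ↥K ↥(LinearMap.ker L') = b - 1 := by omega
        have hkercard : Fintype.card ↥(LinearMap.ker L') = q ^ (b - 1) := by
          rw [Module.card_eq_pow_finrank (K := ↥K), hcK, hkerrank]
        have hker2 : (Finset.univ.filter fun w : ↥V => ¬ (L (w : F) ≠ 0)).card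
            = q ^ (b - 1) := by
          rw [← hkercard, Fintype.card_congr (Equiv.subtypeEquivRight
            (q := fun w : ↥V => ¬ (L (w : F) ≠ 0)) (fun w => by
              simp [LinearMap.mem_ker, hL', LinearMap.domRestrict_apply])),
            Fintype.card_subtype]
        have hsplit : (Finset.univ.filter fun w : ↥V => L (w : F) ≠ 0).card
            + (Finset.univ.filter fun w : ↥V => ¬ (L (w : F) ≠ 0)).card
            = Fintype.card ↥V := by
          rw [Finset.card_filter_add_card_filter_not, Finset.card_univ]
        have hle : q ^ (b - 1) ≤ q ^ b := Nat.pow_le_pow_right (by omega) (by omega)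
        omega
      have : (q - 1) * (Finset.univ.filter fun i : Fin ((q ^ b - 1) / (q - 1)) => L (θ i) ≠ 0).card =
          (q - 1) * q ^ (b - 1) := by
        rw [count1, count2, count3]
        have hqb : q ^ b = q * q ^ (b - 1) := by
          conv_lhs => rw [show b = (b - 1) + 1 by omega]
          rw [pow_succ]; ring
        rw [hqb, Nat.sub_mul, one_mul]
      have := Nat.eq_of_mul_eq_mul_left (show 0 < q - 1 by omega) this
      simp only [hLθ]
      exact this
    · rw [if_neg hnz]
      push_neg at hnz
      have hker : ∀ v ∈ V, L v = 0 := by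
        intro v hv
        have hle : V ≤ LinearMap.ker L := by
          rw [hV, Submodule.span_le]
          rintro _ ⟨j, rfl⟩
          simp only [SetLike.mem_coe, LinearMap.mem_ker]
          rw [hTapp]
          exact hnz j
        exact hle hv
      rw [Finset.card_eq_zero, Finset.filter_eq_empty_iff]
      intro i _
      simp only [hLθ, ne_eq, not_not]
      exact hker _ (hθV i).1
  -- rewrite wb b
  have hstep : ∀ (i : ZMod n) (j : Fin b),
      a * (η : F) ^ (N * ((i + ((j : ℕ) : ZMod n)).val)) =
      (a * (η : F) ^ (N * i.val)) * g j := by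
    intro i j
    rw [mul_assoc]
    congr 1
    have h2 : ((η : F) ^ N) ^ ((i + ((j : ℕ) : ZMod n)).val)
        = ((η : F) ^ N) ^ (i.val + (j : ℕ)) := by
      rw [pow_mod_eq _ hζ1, pow_mod_eq _ hζ1 (i.val + (j : ℕ))]
      congr 1
      rw [ZMod.val_add, ZMod.val_natCast, Nat.mod_mod_of_dvd _ dvd_rfl, Nat.add_mod_mod]
    rw [pow_mul, h2, pow_add, ← pow_mul, ← pow_mul]
  have hwb : wb b (fun j : ZMod n => Algebra.trace ↥K F (a * (η : F) ^ (N * j.val))) =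
      (Finset.univ.filter fun i : ZMod n =>
        ∃ j : Fin b, Algebra.trace ↥K F ((a * (η : F) ^ (N * i.val)) * g j) ≠ 0).card := by
    rw [wb, Nat.card_eq_fintype_card, Fintype.card_subtype]
    congr 1
    ext i
    simp only [Finset.mem_filter, Finset.mem_univ, true_and]
    rw [Function.ne_iff]
    constructor
    · rintro ⟨j, hj⟩
      refine ⟨j, ?_⟩
      simp only [pib, Pi.zero_apply] at hj
      rwa [hstep i j] at hj
    · rintro ⟨j, hj⟩
      refine ⟨j, ?_⟩
      simp only [pib, Pi.zero_apply]
      rwa [← hstep i j] at hj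
  have hw1 : ∀ i0 : Fin ((q ^ b - 1) / (q - 1)),
      wb 1 (fun j : ZMod n => Algebra.trace ↥K F (θ i0 * a * (η : F) ^ (N * j.val))) =
      (Finset.univ.filter fun jp : ZMod n =>
        Algebra.trace ↥K F (θ i0 * (a * (η : F) ^ (N * jp.val))) ≠ 0).card := by
    intro i0
    rw [wb, Nat.card_eq_fintype_card, Fintype.card_subtype]
    congr 1
    ext i
    simp only [Finset.mem_filter, Finset.mem_univ, true_and]
    rw [Function.ne_iff]
    constructor
    · rintro ⟨j, hj⟩
      simp only [pib, Pi.zero_apply, Fin.val_eq_zero, Nat.cast_zero, add_zero] at hj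
      rwa [mul_assoc] at hj
    · intro hj
      refine ⟨0, ?_⟩
      simp only [pib, Pi.zero_apply, Fin.val_eq_zero, Nat.cast_zero, add_zero]
      rwa [← mul_assoc] at hj
  -- main counting identity over ℕ
  have main : ∑ i : Fin ((q ^ b - 1) / (q - 1)),
      wb 1 (fun j : ZMod n => Algebra.trace ↥K F (θ i * a * (η : F) ^ (N * j.val))) =
      q ^ (b - 1) *
        wb b (fun j : ZMod n => Algebra.trace ↥K F (a * (η : F) ^ (N * j.val))) := by
    calc ∑ i : Fin ((q ^ b - 1) / (q - 1)),
        wb 1 (fun j : ZMod n => Algebra.trace ↥K F (θ i * a * (η : F) ^ (N * j.val)))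
        = ∑ i : Fin ((q ^ b - 1) / (q - 1)), ∑ jp : ZMod n,
            (if Algebra.trace ↥K F (θ i * (a * (η : F) ^ (N * jp.val))) ≠ 0 then 1 else 0) := by
          refine Finset.sum_congr rfl fun i _ => ?_
          rw [hw1 i, Finset.card_filter]
      _ = ∑ jp : ZMod n, ∑ i : Fin ((q ^ b - 1) / (q - 1)),
            (if Algebra.trace ↥K F (θ i * (a * (η : F) ^ (N * jp.val))) ≠ 0 then 1 else 0) :=
          Finset.sum_comm
      _ = ∑ jp : ZMod n,
            (if (∃ j : Fin b, Algebra.trace ↥K F ((a * (η : F) ^ (N * jp.val)) * g j) ≠ 0)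
              then q ^ (b - 1) else 0) := by
          refine Finset.sum_congr rfl fun jp _ => ?_
          rw [← Finset.card_filter]
          exact key (a * (η : F) ^ (N * jp.val))
      _ = q ^ (b - 1) * (Finset.univ.filter fun i : ZMod n =>
            ∃ j : Fin b, Algebra.trace ↥K F ((a * (η : F) ^ (N * i.val)) * g j) ≠ 0).card := by
          rw [Finset.card_filter, Finset.mul_sum]
          refine Finset.sum_congr rfl fun jp _ => ?_
          split <;> simp
      _ = _ := by rw [hwb]
  -- conclude over ℚ
  rw [eq_comm, div_mul_eq_mul_div, one_mul, div_eq_iff (by positivity), ← Nat.cast_sum, main]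
  push_cast
  ring
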